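/- Let d > 0 and let g : [0, π/2] → ℝ be the generalized collision invariant function g(θ) = −∫₀^θ (∫_β^{π/2} sin(2α) e^{−1/(d cos α)} dα)/(cos²β · e^{1/(d cos β)}) dβ. Then the hydrodynamic coefficients d₂ = ⟨g·(sin θ/cos θ)⟩_M / ⟨g·(sin θ/cos²θ)⟩_M and μ = d·⟨g·sin θ⟩_M / ⟨g·(sin θ/cos²θ)⟩_M are strictly positive real numbers (both numerators and the common denominator are finite and strictly negative). -/

import Mathlib

open Real MeasureTheory Set
open scoped Interval

/-- The generalized collision invariant function `g` of the nematic alignment operator. -/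
noncomputable def gci (d θ : ℝ) : ℝ :=
  -∫ β in (0:ℝ)..θ,
      (∫ α in β..(π/2), sin (2*α) * exp (-1 / (d * cos α))) /
        (cos β ^ 2 * exp (1 / (d * cos β)))

/-- Generalized von Mises average of a function `φ` on `[0, π/2)`. -/
noncomputable def gvmAvg (d : ℝ) (φ : ℝ → ℝ) : ℝ :=
  (∫ θ in (0:ℝ)..(π/2), φ θ * exp (-1 / (d * cos θ))) /
    (∫ θ in (0:ℝ)..(π/2), exp (-1 / (d * cos θ)))

noncomputable def fIn (d α : ℝ) : ℝ := sin (2*α) * exp (-1 / (d * cos α))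
noncomputable def Iin (d β : ℝ) : ℝ := ∫ α in β..(π/2), fIn d α
noncomputable def Gfn (d β : ℝ) : ℝ := Iin d β / (cos β ^ 2 * exp (1 / (d * cos β)))

lemma intervalIntegrable_of_bound {f : ℝ → ℝ} {a b C : ℝ}
    (hm : AEStronglyMeasurable f (volume.restrict (Ι a b)))
    (h : ∀ x ∈ Ι a b, |f x| ≤ C) : IntervalIntegrable f volume a b := by
  rw [intervalIntegrable_iff]
  have hfin : volume (Ι a b) < ⊤ := by rw [Set.uIoc]; exact measure_Ioc_lt_top
  exact Integrable.mono' ((integrableOn_const_iff (C := C)).mpr (Or.inr hfin)) hm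
    ((ae_restrict_iff' measurableSet_uIoc).2 (Filter.Eventually.of_forall fun x hx => by
      simpa [Real.norm_eq_abs] using h x hx))

lemma hf_meas (d : ℝ) : Measurable (fIn d) := by unfold fIn; fun_prop

lemma hpi2 : (0:ℝ) < π/2 := by positivity

lemma cos_nonneg_of_mem {θ : ℝ} (h : θ ∈ Ioc 0 (π/2)) : 0 ≤ cos θ :=
  Real.cos_nonneg_of_mem_Icc ⟨by linarith [h.1, pi_pos], h.2⟩

lemma exp_w_le_one {d c : ℝ} (hd : 0 < d) (hc : 0 ≤ c) : exp (-1 / (d*c)) ≤ 1 := by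
  rw [Real.exp_le_one_iff]
  rw [neg_div]
  simp only [neg_nonpos]
  positivity

lemma hf_bound {d : ℝ} (hd : 0 < d) {α : ℝ} (h : α ∈ Ioc 0 (π/2)) : |fIn d α| ≤ 1 := by
  have hc := cos_nonneg_of_mem h
  have h1 := exp_w_le_one hd hc
  have h2 := Real.exp_pos (-1 / (d * cos α))
  have h3 : |sin (2*α)| ≤ 1 := abs_sin_le_one _
  calc |fIn d α| = |sin (2*α)| * |exp (-1 / (d * cos α))| := abs_mul _ _
    _ ≤ 1 * 1 := by
        apply mul_le_mul h3 _ (abs_nonneg _) zero_le_one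
        rw [abs_of_pos h2]; exact h1
    _ = 1 := by norm_num

lemma hf_int {d : ℝ} (hd : 0 < d) {β : ℝ} (hβ : β ∈ Icc 0 (π/2)) :
    IntervalIntegrable (fIn d) volume β (π/2) := by
  apply intervalIntegrable_of_bound (C := 1) ((hf_meas d).aestronglyMeasurable.restrict)
  intro x hx
  rw [uIoc_of_le hβ.2] at hx
  exact hf_bound hd ⟨lt_of_le_of_lt hβ.1 hx.1, hx.2⟩

lemma hI_pos {d : ℝ} (hd : 0 < d) {β : ℝ} (hβ : β ∈ Ico 0 (π/2)) : 0 < Iin d β := by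
  apply intervalIntegral.intervalIntegral_pos_of_pos_on (hf_int hd ⟨hβ.1, hβ.2.le⟩) _ hβ.2
  intro x hx
  have h1 : 0 < sin (2*x) := by
    apply Real.sin_pos_of_pos_of_lt_pi
    · linarith [hβ.1, hx.1]
    · linarith [hx.2]
  exact mul_pos h1 (Real.exp_pos _)

lemma hI_bound {d : ℝ} (hd : 0 < d) {β : ℝ} (hβ : β ∈ Icc 0 (π/2)) : |Iin d β| ≤ π/2 := by
  have h := intervalIntegral.norm_integral_le_of_norm_le_const (C := 1) (f := fIn d)
    (a := β) (b := π/2) (fun x hx => by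
      rw [uIoc_of_le hβ.2] at hx
      rw [Real.norm_eq_abs]
      exact hf_bound hd ⟨lt_of_le_of_lt hβ.1 hx.1, hx.2⟩)
  rw [Real.norm_eq_abs] at h
  calc |Iin d β| ≤ 1 * |π/2 - β| := h
    _ ≤ π/2 := by rw [one_mul, abs_of_nonneg (by linarith [hβ.2])]; linarith [hβ.1]

lemma hI_cont {d : ℝ} (hd : 0 < d) : ContinuousOn (Iin d) (Icc 0 (π/2)) := by
  have h : IntegrableOn (fIn d) (uIcc 0 (π/2)) volume := by
    rw [uIcc_of_le hpi2.le, integrableOn_Icc_iff_integrableOn_Ioc]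
    have := hf_int hd (d := d) (β := 0) ⟨le_rfl, hpi2.le⟩
    rwa [intervalIntegrable_iff, uIoc_of_le hpi2.le] at this
  have := intervalIntegral.continuousOn_primitive_interval_left (f := fIn d) (μ := volume) h
  rwa [uIcc_of_le hpi2.le] at this

lemma exp_bound1 {d c : ℝ} (hd : 0 < d) (hc : 0 < c) : exp (-1 / (d*c)) ≤ d * c := by
  have hdc : 0 < d * c := mul_pos hd hc
  have h1 : 1/(d*c) ≤ exp (1/(d*c)) := le_trans (by linarith) (Real.add_one_le_exp _)
  have h2 : (0:ℝ) < 1/(d*c) := by positivity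
  rw [neg_div, Real.exp_neg]
  calc (exp (1/(d*c)))⁻¹ ≤ (1/(d*c))⁻¹ := by
        exact inv_anti₀ h2 h1
    _ = d * c := by rw [one_div, inv_inv]

lemma exp_bound2 {d c : ℝ} (hd : 0 < d) (hc : 0 < c) : exp (-1 / (d*c)) ≤ 4*d^2*c^2 := by
  have hdc : 0 < d * c := mul_pos hd hc
  set y := 1/(d*c) with hy
  have hy0 : 0 < y := by positivity
  have h1 : y/2 ≤ exp (y/2) := le_trans (by linarith) (Real.add_one_le_exp _)
  have h2 : exp (y/2) * exp (y/2) = exp y := by rw [← Real.exp_add]; ring_nf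
  have h3 : y^2/4 ≤ exp y := by nlinarith
  have hdcy : d * c * y = 1 := by rw [hy]; field_simp
  have h5 : d^2*c^2*y^2 = 1 := by nlinarith [hdcy]
  have h6 := mul_le_mul_of_nonneg_left h3 (show (0:ℝ) ≤ 4*d^2*c^2 by positivity)
  have hkey : (1:ℝ) ≤ 4*d^2*c^2 * exp y := by nlinarith
  have h4 : exp (-1/(d*c)) * exp y = 1 := by
    rw [← Real.exp_add]; rw [hy]; ring_nf; exact Real.exp_zero
  nlinarith [exp_pos y, Real.exp_pos (-1/(d*c))]

lemma denom_inv_le {d c : ℝ} (hd : 0 < d) (hc : 0 < c) :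
    1 / (c^2 * exp (1 / (d*c))) ≤ 4*d^2 := by
  have hD : 0 < c^2 * exp (1 / (d*c)) := by positivity
  rw [div_le_iff₀ hD]
  have h2 : exp (-1 / (d*c)) ≤ 4*d^2*c^2 := exp_bound2 hd hc
  have h4 : exp (-1/(d*c)) * exp (1/(d*c)) = 1 := by
    rw [← Real.exp_add]; ring_nf; exact Real.exp_zero
  nlinarith [Real.exp_pos (1/(d*c)), Real.exp_pos (-1/(d*c))]

lemma hG_bound {d : ℝ} (hd : 0 < d) {β : ℝ} (hβ : β ∈ Ioc 0 (π/2)) :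
    |Gfn d β| ≤ 2*π*d^2 := by
  have hc := cos_nonneg_of_mem hβ
  rcases eq_or_lt_of_le hc with hc0 | hc0
  · unfold Gfn
    rw [← hc0]
    norm_num
    positivity
  · unfold Gfn
    have hD : 0 < cos β^2 * exp (1 / (d*cos β)) := by positivity
    rw [abs_div, abs_of_pos hD, div_eq_mul_one_div]
    have h1 := hI_bound hd (d := d) ⟨hβ.1.le, hβ.2⟩
    have h2 := denom_inv_le hd hc0
    have h3 : 0 ≤ 1 / (cos β^2 * exp (1 / (d*cos β))) := by positivity
    calc |Iin d β| * (1 / (cos β^2 * exp (1 / (d*cos β)))) ≤ (π/2) * (4*d^2) := by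
          apply mul_le_mul h1 h2 h3 (by positivity)
      _ = 2*π*d^2 := by ring

lemma hG_pos {d : ℝ} (hd : 0 < d) {β : ℝ} (hβ : β ∈ Ioo 0 (π/2)) : 0 < Gfn d β := by
  have hc : 0 < cos β := Real.cos_pos_of_mem_Ioo ⟨by linarith [hβ.1, pi_pos], hβ.2⟩
  exact div_pos (hI_pos hd ⟨hβ.1.le, hβ.2⟩) (by positivity)

lemma hG_aesm {d : ℝ} (hd : 0 < d) :
    AEStronglyMeasurable (Gfn d) (volume.restrict (Ι 0 (π/2))) := by
  have h1 : AEStronglyMeasurable (Iin d) (volume.restrict (Ι 0 (π/2))) := by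
    apply ((hI_cont hd).aestronglyMeasurable measurableSet_Icc).mono_measure
    apply Measure.restrict_mono _ le_rfl
    rw [uIoc_of_le hpi2.le]
    exact Ioc_subset_Icc_self
  have h2 : AEStronglyMeasurable (fun β : ℝ => cos β ^ 2 * exp (1 / (d * cos β)))
      (volume.restrict (Ι 0 (π/2))) := by
    apply Measurable.aestronglyMeasurable
    fun_prop
  unfold Gfn
  exact (h1.aemeasurable.div h2.aemeasurable).aestronglyMeasurable

lemma hG_int {d : ℝ} (hd : 0 < d) : IntervalIntegrable (Gfn d) volume 0 (π/2) := by
  apply intervalIntegrable_of_bound (C := 2*π*d^2) (hG_aesm hd)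
  intro x hx
  rw [uIoc_of_le hpi2.le] at hx
  exact hG_bound hd hx

lemma gci_eq (d θ : ℝ) : gci d θ = -∫ β in (0:ℝ)..θ, Gfn d β := rfl

lemma hgci_neg {d : ℝ} (hd : 0 < d) {θ : ℝ} (hθ : θ ∈ Ioc 0 (π/2)) : gci d θ < 0 := by
  rw [gci_eq, neg_lt_zero]
  apply intervalIntegral.intervalIntegral_pos_of_pos_on _ _ hθ.1
  · apply (hG_int hd).mono_set
    rw [uIcc_of_le hθ.1.le, uIcc_of_le hpi2.le]
    exact Icc_subset_Icc le_rfl hθ.2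
  · intro x hx
    exact hG_pos hd ⟨hx.1, lt_of_lt_of_le hx.2 hθ.2⟩

lemma hgci_bound {d : ℝ} (hd : 0 < d) {θ : ℝ} (hθ : θ ∈ Icc 0 (π/2)) :
    |gci d θ| ≤ π^2 * d^2 := by
  rw [gci_eq, abs_neg]
  have h := intervalIntegral.norm_integral_le_of_norm_le_const (C := 2*π*d^2) (f := Gfn d)
    (a := 0) (b := θ) (fun x hx => by
      rw [uIoc_of_le hθ.1] at hx
      rw [Real.norm_eq_abs]
      exact hG_bound hd ⟨hx.1, le_trans hx.2 hθ.2⟩)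
  rw [Real.norm_eq_abs] at h
  calc |∫ β in (0:ℝ)..θ, Gfn d β| ≤ 2*π*d^2 * |θ - 0| := h
    _ ≤ 2*π*d^2 * (π/2) := by
        apply mul_le_mul_of_nonneg_left _ (by positivity)
        rw [sub_zero, abs_of_nonneg hθ.1]; exact hθ.2
    _ = π^2 * d^2 := by ring

lemma hgci_cont {d : ℝ} (hd : 0 < d) : ContinuousOn (gci d) (Icc 0 (π/2)) := by
  have h : IntegrableOn (Gfn d) (uIcc 0 (π/2)) volume := by
    rw [uIcc_of_le hpi2.le, integrableOn_Icc_iff_integrableOn_Ioc]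
    have := hG_int hd (d := d)
    rwa [intervalIntegrable_iff, uIoc_of_le hpi2.le] at this
  have h2 := (intervalIntegral.continuousOn_primitive_interval (f := Gfn d) (μ := volume) h).neg
  rw [uIcc_of_le hpi2.le] at h2
  exact h2.congr fun θ _ => gci_eq d θ

lemma hgci_aesm {d : ℝ} (hd : 0 < d) :
    AEStronglyMeasurable (gci d) (volume.restrict (Ι 0 (π/2))) := by
  apply ((hgci_cont hd).aestronglyMeasurable measurableSet_Icc).mono_measure
  apply Measure.restrict_mono _ le_rfl
  rw [uIoc_of_le hpi2.le]
  exact Ioc_subset_Icc_self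

lemma qw_bound1 {d : ℝ} (hd : 0 < d) {θ : ℝ} (hθ : θ ∈ Ioc 0 (π/2)) :
    |sin θ / cos θ ^ 2 * exp (-1 / (d * cos θ))| ≤ 4*d^2 := by
  have hc := cos_nonneg_of_mem hθ
  rcases eq_or_lt_of_le hc with hc0 | hc0
  · rw [← hc0]; norm_num; positivity
  · have hs0 : 0 ≤ sin θ := Real.sin_nonneg_of_nonneg_of_le_pi hθ.1.le
      (by linarith [hθ.2, pi_pos])
    have hs1 : sin θ ≤ 1 := Real.sin_le_one θ
    have hw := Real.exp_pos (-1 / (d * cos θ))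
    have h2 := exp_bound2 hd hc0
    rw [abs_of_nonneg (by positivity), div_mul_eq_mul_div, div_le_iff₀ (by positivity)]
    nlinarith
lemma qw_bound2 {d : ℝ} (hd : 0 < d) {θ : ℝ} (hθ : θ ∈ Ioc 0 (π/2)) :
    |sin θ / cos θ * exp (-1 / (d * cos θ))| ≤ d := by
  have hc := cos_nonneg_of_mem hθ
  rcases eq_or_lt_of_le hc with hc0 | hc0
  · rw [← hc0]; norm_num; positivity
  · have hs0 : 0 ≤ sin θ := Real.sin_nonneg_of_nonneg_of_le_pi hθ.1.le
      (by linarith [hθ.2, pi_pos])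
    have hs1 : sin θ ≤ 1 := Real.sin_le_one θ
    have hw := Real.exp_pos (-1 / (d * cos θ))
    have h2 := exp_bound1 hd hc0
    rw [abs_of_nonneg (by positivity), div_mul_eq_mul_div, div_le_iff₀ (by positivity)]
    nlinarith
lemma qw_bound3 {d : ℝ} (hd : 0 < d) {θ : ℝ} (hθ : θ ∈ Ioc 0 (π/2)) :
    |sin θ * exp (-1 / (d * cos θ))| ≤ 1 := by
  have hc := cos_nonneg_of_mem hθ
  have hs0 : 0 ≤ sin θ := Real.sin_nonneg_of_nonneg_of_le_pi hθ.1.le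
    (by linarith [hθ.2, pi_pos])
  have hw := Real.exp_pos (-1 / (d * cos θ))
  have h1 := exp_w_le_one hd hc
  rw [abs_of_nonneg (by positivity)]
  nlinarith [Real.sin_le_one θ]

lemma numer_facts {d : ℝ} (hd : 0 < d) {q : ℝ → ℝ} (hqm : Measurable q) {Bq : ℝ}
    (hb : ∀ θ ∈ Ioc 0 (π/2), |q θ * exp (-1 / (d * cos θ))| ≤ Bq)
    (hqpos : ∀ θ ∈ Ioo 0 (π/2), 0 < q θ) :
    IntervalIntegrable (fun θ => gci d θ * q θ * exp (-1 / (d * cos θ))) volume 0 (π/2) ∧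
    (∫ θ in (0:ℝ)..(π/2), gci d θ * q θ * exp (-1 / (d * cos θ))) < 0 := by
  have hwm : Measurable fun θ : ℝ => exp (-1 / (d * cos θ)) := by fun_prop
  have hint : IntervalIntegrable (fun θ => gci d θ * q θ * exp (-1 / (d * cos θ)))
      volume 0 (π/2) := by
    apply intervalIntegrable_of_bound (C := π^2*d^2 * Bq)
      (((hgci_aesm hd).mul hqm.aestronglyMeasurable.restrict).mul
        hwm.aestronglyMeasurable.restrict)
    intro x hx
    rw [uIoc_of_le hpi2.le] at hx
    simp only [Pi.mul_apply]
    rw [mul_assoc, abs_mul]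
    exact mul_le_mul (hgci_bound hd ⟨hx.1.le, hx.2⟩) (hb x hx) (abs_nonneg _) (by positivity)
  refine ⟨hint, ?_⟩
  have hpos := intervalIntegral.intervalIntegral_pos_of_pos_on hint.neg (fun x hx => by
    have hg := hgci_neg hd ⟨hx.1, hx.2.le⟩
    have hq := hqpos x hx
    have hw := Real.exp_pos (-1 / (d * cos x))
    simp only [Pi.neg_apply, neg_pos]
    exact mul_neg_of_neg_of_pos (mul_neg_of_neg_of_pos hg hq) hw) hpi2
  simp only [Pi.neg_apply] at hpos
  rw [intervalIntegral.integral_neg] at hpos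
  linarith

lemma denom_pos {d : ℝ} (hd : 0 < d) :
    0 < ∫ θ in (0:ℝ)..(π/2), exp (-1 / (d * cos θ)) := by
  apply intervalIntegral.intervalIntegral_pos_of_pos_on _ (fun x _ => Real.exp_pos _) hpi2
  apply intervalIntegrable_of_bound (C := 1)
    ((by fun_prop : Measurable fun θ : ℝ => exp (-1 / (d * cos θ))).aestronglyMeasurable.restrict)
  intro x hx
  rw [uIoc_of_le hpi2.le] at hx
  rw [abs_of_pos (Real.exp_pos _)]
  exact exp_w_le_one hd (cos_nonneg_of_mem hx)

/-- The hydrodynamic coefficients `d₂ = ⟨g sin/cos⟩_M / ⟨g sin/cos²⟩_M` and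
`μ = d ⟨g sin⟩_M / ⟨g sin/cos²⟩_M` are strictly positive: both numerators and the common
denominator are finite and strictly negative. -/
theorem hydrodynamic_coefficients_pos (d : ℝ) (hd : 0 < d) :
    (IntervalIntegrable
        (fun θ => gci d θ * (sin θ / cos θ ^ 2) * exp (-1 / (d * cos θ))) volume 0 (π/2) ∧
      gvmAvg d (fun θ => gci d θ * (sin θ / cos θ ^ 2)) < 0) ∧
    (IntervalIntegrable
        (fun θ => gci d θ * (sin θ / cos θ) * exp (-1 / (d * cos θ))) volume 0 (π/2) ∧
      gvmAvg d (fun θ => gci d θ * (sin θ / cos θ)) < 0) ∧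
    (IntervalIntegrable
        (fun θ => gci d θ * sin θ * exp (-1 / (d * cos θ))) volume 0 (π/2) ∧
      gvmAvg d (fun θ => gci d θ * sin θ) < 0) ∧
    0 < gvmAvg d (fun θ => gci d θ * (sin θ / cos θ))
          / gvmAvg d (fun θ => gci d θ * (sin θ / cos θ ^ 2)) ∧
    0 < d * gvmAvg d (fun θ => gci d θ * sin θ)
          / gvmAvg d (fun θ => gci d θ * (sin θ / cos θ ^ 2)) := by
  have hD := denom_pos hd
  have hsinpos : ∀ θ ∈ Ioo (0:ℝ) (π/2), 0 < sin θ := fun θ hθ =>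
    Real.sin_pos_of_pos_of_lt_pi hθ.1 (by linarith [hθ.2, pi_pos])
  have hcospos : ∀ θ ∈ Ioo (0:ℝ) (π/2), 0 < cos θ := fun θ hθ =>
    Real.cos_pos_of_mem_Ioo ⟨by linarith [hθ.1, pi_pos], hθ.2⟩
  have h1 := numer_facts hd (q := fun θ => sin θ / cos θ ^ 2) (by fun_prop)
    (fun θ hθ => qw_bound1 hd hθ)
    (fun θ hθ => div_pos (hsinpos θ hθ) (pow_pos (hcospos θ hθ) 2))
  have h2 := numer_facts hd (q := fun θ => sin θ / cos θ) (by fun_prop)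
    (fun θ hθ => qw_bound2 hd hθ)
    (fun θ hθ => div_pos (hsinpos θ hθ) (hcospos θ hθ))
  have h3 := numer_facts hd (q := fun θ => sin θ) Real.measurable_sin
    (fun θ hθ => qw_bound3 hd hθ) hsinpos
  have ha1 : gvmAvg d (fun θ => gci d θ * (sin θ / cos θ ^ 2)) < 0 := by
    rw [gvmAvg]
    exact div_neg_of_neg_of_pos h1.2 hD
  have ha2 : gvmAvg d (fun θ => gci d θ * (sin θ / cos θ)) < 0 := by
    rw [gvmAvg]
    exact div_neg_of_neg_of_pos h2.2 hD
  have ha3 : gvmAvg d (fun θ => gci d θ * sin θ) < 0 := by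
    rw [gvmAvg]
    exact div_neg_of_neg_of_pos h3.2 hD
  exact ⟨⟨h1.1, ha1⟩, ⟨h2.1, ha2⟩, ⟨h3.1, ha3⟩,
    div_pos_of_neg_of_neg ha2 ha1,
    div_pos_of_neg_of_neg (mul_neg_of_pos_of_neg hd ha3) ha1⟩
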